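/- The map taking an ASM A of order n to the triangular array whose i-th row lists, in increasing order, the columns j with Σ_{i'≤i} a_{i',j} = 1, is a bijection from ASMs of order n onto monotone triangles of order n: triangular arrays (t_{i,j})_{1≤j≤i≤n} of positive integers with bottom row t_{n,j} = j for all j, each row strictly increasing (t_{i,j} < t_{i,j+1}), and satisfying the interlacing condition t_{i+1,j} ≤ t_{i,j} ≤ t_{i+1,j+1}. -/

import Mathlib

/-- An alternating-sign matrix of order `n`: entries in `{-1,0,1}`, all partial sums of
each row and each column (from the start) are `0` or `1`, and every row and column sums
to `1`.  This is equivalent to the condition that in each row and column the nonzero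
entries alternate in sign, beginning and ending with `+1`. -/
def IsASM {n : ℕ} (A : Matrix (Fin n) (Fin n) ℤ) : Prop :=
  (∀ i j, A i j = -1 ∨ A i j = 0 ∨ A i j = 1) ∧
  (∀ i j, ∑ j' ∈ Finset.univ.filter (fun j' => j' ≤ j), A i j' = 0 ∨
          ∑ j' ∈ Finset.univ.filter (fun j' => j' ≤ j), A i j' = 1) ∧
  (∀ i j, ∑ i' ∈ Finset.univ.filter (fun i' => i' ≤ i), A i' j = 0 ∨
          ∑ i' ∈ Finset.univ.filter (fun i' => i' ≤ i), A i' j = 1) ∧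
  (∀ i, ∑ j, A i j = 1) ∧
  (∀ j, ∑ i, A i j = 1)

/-- A monotone triangle of order `n`, recorded as a function `t : ℕ → ℕ → ℕ` whose
meaningful entries are `t i j` for `1 ≤ j ≤ i ≤ n` (row `i` has entries
`t i 1 < ⋯ < t i i`); entries outside this triangular range are normalized to `0`.
The bottom row is `1,2,…,n`, each row is strictly increasing, all entries are positive,
and consecutive rows interlace: `t (i+1) j ≤ t i j ≤ t (i+1) (j+1)`. -/
def IsMonotoneTriangle (n : ℕ) (t : ℕ → ℕ → ℕ) : Prop :=
  (∀ i j, 1 ≤ j → j ≤ i → i ≤ n → 1 ≤ t i j) ∧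
  (∀ j, 1 ≤ j → j ≤ n → t n j = j) ∧
  (∀ i j, 1 ≤ j → j + 1 ≤ i → i ≤ n → t i j < t i (j + 1)) ∧
  (∀ i j, 1 ≤ j → j ≤ i → i + 1 ≤ n → t (i + 1) j ≤ t i j ∧ t i j ≤ t (i + 1) (j + 1)) ∧
  (∀ i j, ¬(1 ≤ j ∧ j ≤ i ∧ i ≤ n) → t i j = 0)

/-- The triangular array associated to an ASM `A` of order `n`: the `i`-th row
(`1 ≤ i ≤ n`) lists, in increasing order, the (1-based) columns `j` such that
`Σ_{i' ≤ i} a_{i',j} = 1`; entries outside the triangle are `0`. -/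
def asmTriangle {n : ℕ} (A : Matrix (Fin n) (Fin n) ℤ) : ℕ → ℕ → ℕ :=
  fun i j =>
    if 1 ≤ j ∧ j ≤ i ∧ i ≤ n then
      (((Finset.univ.filter
            (fun c : Fin n =>
              (∑ r ∈ Finset.univ.filter (fun r : Fin n => (r : ℕ) < i), A r c) = 1)).sort
          (· ≤ ·)).map (fun c => (c : ℕ) + 1)).getD (j - 1) 0
    else 0

open Finset

namespace ASMBij

variable {n : ℕ}

def ps (A : Matrix (Fin n) (Fin n) ℤ) (i : ℕ) (c : Fin n) : ℤ :=
  ∑ r ∈ Finset.univ.filter (fun r : Fin n => (r : ℕ) < i), A r c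

def colset (A : Matrix (Fin n) (Fin n) ℤ) (i : ℕ) : Finset (Fin n) :=
  Finset.univ.filter (fun c => ps A i c = 1)

lemma ps_zero (A : Matrix (Fin n) (Fin n) ℤ) (c : Fin n) : ps A 0 c = 0 := by simp [ps]

lemma ps_succ (A : Matrix (Fin n) (Fin n) ℤ) {i : ℕ} (h : i < n) (c : Fin n) :
    ps A (i + 1) c = ps A i c + A ⟨i, h⟩ c := by
  unfold ps
  have : Finset.univ.filter (fun r : Fin n => (r:ℕ) < i + 1)
      = insert (⟨i, h⟩ : Fin n) (Finset.univ.filter (fun r : Fin n => (r:ℕ) < i)) := by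
    ext r; simp [Fin.ext_iff]; omega
  rw [this, Finset.sum_insert (by simp)]
  ring

lemma filter_lt_n : Finset.univ.filter (fun r : Fin n => (r:ℕ) < n) = Finset.univ := by
  apply Finset.filter_true_of_mem; intro r _; exact r.isLt

variable {A : Matrix (Fin n) (Fin n) ℤ}

lemma ps_mem (hA : IsASM A) {i : ℕ} (hin : i ≤ n) (c : Fin n) :
    ps A i c = 0 ∨ ps A i c = 1 := by
  rcases Nat.eq_zero_or_pos i with rfl | hi
  · left; exact ps_zero A c
  · have hn : i - 1 < n := by omega
    have h := hA.2.2.1 ⟨i - 1, hn⟩ c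
    have heq : Finset.univ.filter (fun r : Fin n => r ≤ ⟨i - 1, hn⟩)
        = Finset.univ.filter (fun r : Fin n => (r : ℕ) < i) := by
      apply Finset.filter_congr; intro r _
      rw [Fin.le_def]; simp only; omega
    rw [heq] at h
    exact h

lemma ps_n (hA : IsASM A) (c : Fin n) : ps A n c = 1 := by
  unfold ps; rw [filter_lt_n]; exact hA.2.2.2.2 c

lemma mem_colset {i : ℕ} {c : Fin n} : c ∈ colset A i ↔ ps A i c = 1 := by
  simp [colset]

lemma colset_n (hA : IsASM A) : colset A n = Finset.univ := by
  apply Finset.filter_true_of_mem; intro c _; exact ps_n hA c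

lemma card_filter_lt {i : ℕ} (hin : i ≤ n) :
    (Finset.univ.filter (fun r : Fin n => (r : ℕ) < i)).card = i := by
  rcases Nat.lt_or_ge i n with h | h
  · have : Finset.univ.filter (fun r : Fin n => (r : ℕ) < i) = Finset.Iio ⟨i, h⟩ := by
      ext r; simp [Fin.lt_def]
    rw [this, Fin.card_Iio]
  · have hn : i = n := le_antisymm hin h
    subst hn
    rw [filter_lt_n, Finset.card_univ, Fintype.card_fin]

lemma card_colset (hA : IsASM A) {i : ℕ} (hin : i ≤ n) : (colset A i).card = i := by
  have hsum : ∑ c, ps A i c = (i : ℤ) := by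
    unfold ps
    rw [Finset.sum_comm]
    rw [Finset.sum_congr rfl (fun r _ => hA.2.2.2.1 r)]
    simp [card_filter_lt hin]
  have hsum2 : ∑ c, ps A i c = ((colset A i).card : ℤ) := by
    have heach : ∀ c ∈ Finset.univ, ps A i c = if ps A i c = 1 then (1 : ℤ) else 0 := by
      intro c _; rcases ps_mem hA hin c with h | h <;> simp [h]
    rw [Finset.sum_congr rfl heach, Finset.sum_boole]
    rfl
  rw [hsum2] at hsum
  exact_mod_cast hsum

/-- counting form -/
lemma cnt_eq (hA : IsASM A) {i : ℕ} (hin : i ≤ n) (x : Fin n) :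
    (((colset A i).filter (fun c => c ≤ x)).card : ℤ)
      = ∑ c ∈ Finset.univ.filter (fun c : Fin n => c ≤ x), ps A i c := by
  have heach : ∀ c ∈ Finset.univ.filter (fun c : Fin n => c ≤ x),
      ps A i c = if ps A i c = 1 then (1 : ℤ) else 0 := by
    intro c _; rcases ps_mem hA hin c with h | h <;> simp [h]
  rw [Finset.sum_congr rfl heach, Finset.sum_boole]
  congr 1
  rw [Finset.filter_comm]
  rfl

lemma cnt_succ (hA : IsASM A) {i : ℕ} (h : i < n) (x : Fin n) :
    (((colset A (i + 1)).filter (fun c => c ≤ x)).card : ℤ)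
      = ((colset A i).filter (fun c => c ≤ x)).card
        + ∑ c ∈ Finset.univ.filter (fun c : Fin n => c ≤ x), A ⟨i, h⟩ c := by
  rw [cnt_eq hA (by omega) x, cnt_eq hA (le_of_lt h) x, ← Finset.sum_add_distrib]
  exact Finset.sum_congr rfl (fun c _ => ps_succ A h c)

lemma cnt_interlace (hA : IsASM A) {i : ℕ} (h : i < n) (x : Fin n) :
    ((colset A i).filter (fun c => c ≤ x)).card ≤ ((colset A (i + 1)).filter (fun c => c ≤ x)).card
    ∧ ((colset A (i + 1)).filter (fun c => c ≤ x)).card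
        ≤ ((colset A i).filter (fun c => c ≤ x)).card + 1 := by
  have hrow := hA.2.1 ⟨i, h⟩ x
  have hs := cnt_succ hA h x
  constructor <;> (rcases hrow with h' | h' <;> rw [h'] at hs <;> omega)


section nth

variable {s : Finset (Fin n)} {k : ℕ} (h : s.card = k)

lemma cnt_ge_of_le {j : Fin k} {e : Fin n} (hle : s.orderEmbOfFin h j ≤ e) :
    (j : ℕ) + 1 ≤ (s.filter (fun c => c ≤ e)).card := by
  have hsub : (Finset.Iic j).image (s.orderEmbOfFin h) ⊆ s.filter (fun c => c ≤ e) := by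
    intro c hc
    rcases Finset.mem_image.mp hc with ⟨m, hm, rfl⟩
    refine Finset.mem_filter.mpr ⟨Finset.orderEmbOfFin_mem s h m, ?_⟩
    exact le_trans ((s.orderEmbOfFin h).monotone (Finset.mem_Iic.mp hm)) hle
  calc (j:ℕ) + 1 = (Finset.Iic j).card := (Fin.card_Iic j).symm
    _ = ((Finset.Iic j).image (s.orderEmbOfFin h)).card :=
        (Finset.card_image_of_injective _ (s.orderEmbOfFin h).injective).symm
    _ ≤ _ := Finset.card_le_card hsub

lemma le_of_cnt_ge {j : Fin k} {e : Fin n}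
    (hc : (j : ℕ) + 1 ≤ (s.filter (fun c => c ≤ e)).card) :
    s.orderEmbOfFin h j ≤ e := by
  by_contra hlt
  push_neg at hlt
  have hsub : s.filter (fun c => c ≤ e) ⊆ (Finset.Iio j).image (s.orderEmbOfFin h) := by
    intro c hc'
    rcases Finset.mem_filter.mp hc' with ⟨hcs, hce⟩
    have : c ∈ Set.range (s.orderEmbOfFin h) := by
      rw [Finset.range_orderEmbOfFin]; exact hcs
    rcases this with ⟨m, rfl⟩
    refine Finset.mem_image.mpr ⟨m, Finset.mem_Iio.mpr ?_, rfl⟩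
    have : s.orderEmbOfFin h m < s.orderEmbOfFin h j := lt_of_le_of_lt hce hlt
    exact (s.orderEmbOfFin h).lt_iff_lt.mp this
  have := Finset.card_le_card hsub
  have h2 : ((Finset.Iio j).image (s.orderEmbOfFin h)).card = (j:ℕ) :=
    (Finset.card_image_of_injective _ (s.orderEmbOfFin h).injective).trans (Fin.card_Iio j)
  omega

lemma self_le_nth (j : Fin k) : (j : ℕ) ≤ (s.orderEmbOfFin h j : ℕ) := by
  have h1 := cnt_ge_of_le h (le_refl (s.orderEmbOfFin h j))
  have h2 : s.filter (fun c => c ≤ s.orderEmbOfFin h j) ⊆ Finset.Iic (s.orderEmbOfFin h j) := by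
    intro c hc; exact Finset.mem_Iic.mpr (Finset.mem_filter.mp hc).2
  have := Finset.card_le_card h2
  rw [Fin.card_Iic] at this
  omega

end nth

lemma asmTriangle_apply (A : Matrix (Fin n) (Fin n) ℤ) {i j : ℕ}
    (h : (colset A i).card = i) (hj : 1 ≤ j) (hji : j ≤ i) (hin : i ≤ n) :
    asmTriangle A i j = ((colset A i).orderEmbOfFin h ⟨j - 1, by omega⟩ : ℕ) + 1 := by
  unfold asmTriangle
  rw [if_pos ⟨hj, hji, hin⟩]
  have hlen : j - 1 < ((colset A i).sort (· ≤ ·)).length := by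
    rw [Finset.length_sort, h]; omega
  have hlen' : j - 1 < (((colset A i).sort (· ≤ ·)).map (fun c : Fin n => (c : ℕ) + 1)).length := by
    rw [List.length_map]; exact hlen
  rw [show (Finset.univ.filter
            (fun c : Fin n =>
              (∑ r ∈ Finset.univ.filter (fun r : Fin n => (r : ℕ) < i), A r c) = 1)) = colset A i from rfl]
  have hrw : (((colset A i).sort (· ≤ ·)).flatMap (fun a => ([a.val] : List ℕ)))
      = ((colset A i).sort (· ≤ ·)).map Fin.val :=
    List.flatMap_pure_eq_map _ _
  simp only [List.pure_def, List.bind_eq_flatMap]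
  rw [hrw, List.map_map]
  rw [List.getD_eq_getElem _ _ (by simpa using hlen), List.getElem_map]
  rw [Finset.orderEmbOfFin_apply]
  rfl


lemma asmTriangle_outside (A : Matrix (Fin n) (Fin n) ℤ) {i j : ℕ}
    (h : ¬(1 ≤ j ∧ j ≤ i ∧ i ≤ n)) : asmTriangle A i j = 0 := by
  unfold asmTriangle; rw [if_neg h]

lemma forward (hA : IsASM A) : IsMonotoneTriangle n (asmTriangle A) := by
  refine ⟨?_, ?_, ?_, ?_, fun i j h => asmTriangle_outside A h⟩
  · intro i j hj hji hin
    rw [asmTriangle_apply A (card_colset hA hin) hj hji hin]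
    omega
  · intro j hj hjn
    have hcard := card_colset hA (le_refl n)
    rw [asmTriangle_apply A hcard hj hjn le_rfl]
    have hid : (fun k : Fin n => k) = ⇑((colset A n).orderEmbOfFin hcard) :=
      Finset.orderEmbOfFin_unique hcard
        (fun x => by rw [colset_n hA]; exact Finset.mem_univ x) strictMono_id
    rw [← hid]
    simp only
    omega
  · intro i j hj hji hin
    have hcard := card_colset hA hin
    rw [asmTriangle_apply A hcard hj (by omega) hin,
        asmTriangle_apply A hcard (by omega) hji hin]
    have hlt : (⟨j - 1, by omega⟩ : Fin i) < ⟨j + 1 - 1, by omega⟩ := by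
      rw [Fin.lt_def]; simp only; omega
    have := ((colset A i).orderEmbOfFin hcard).strictMono hlt
    rw [Fin.lt_def] at this
    omega
  · intro i j hj hji hin
    have h1 := card_colset hA (by omega : i ≤ n)
    have h2 := card_colset hA hin
    rw [asmTriangle_apply A h1 hj hji (by omega),
        asmTriangle_apply A h2 hj (by omega) hin,
        asmTriangle_apply A h2 (by omega) (by omega) hin]
    have hj1i : j - 1 < i := by omega
    have hj1i1 : j - 1 < i + 1 := by omega
    have hji1 : j + 1 - 1 < i + 1 := by omega
    have e1 : ((⟨j - 1, hj1i⟩ : Fin i) : ℕ) = j - 1 := rfl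
    have e2 : ((⟨j - 1, hj1i1⟩ : Fin (i + 1)) : ℕ) = j - 1 := rfl
    have e3 : ((⟨j + 1 - 1, hji1⟩ : Fin (i + 1)) : ℕ) = j + 1 - 1 := rfl
    constructor
    · -- g ⟨j-1⟩ ≤ f ⟨j-1⟩
      have hc1 := cnt_ge_of_le h1 (le_refl ((colset A i).orderEmbOfFin h1 ⟨j - 1, hj1i⟩))
      have hc2 := (cnt_interlace hA (i := i) (by omega) ((colset A i).orderEmbOfFin h1 ⟨j - 1, hj1i⟩)).1
      have hle : (colset A (i + 1)).orderEmbOfFin h2 ⟨j - 1, hj1i1⟩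
          ≤ (colset A i).orderEmbOfFin h1 ⟨j - 1, hj1i⟩ := by
        apply le_of_cnt_ge h2
        omega
      rw [Fin.le_def] at hle
      omega
    · -- f ⟨j-1⟩ ≤ g ⟨j+1-1⟩
      have hc1 := cnt_ge_of_le h2 (le_refl ((colset A (i + 1)).orderEmbOfFin h2 ⟨j + 1 - 1, hji1⟩))
      have hc2 := (cnt_interlace hA (i := i) (by omega)
        ((colset A (i + 1)).orderEmbOfFin h2 ⟨j + 1 - 1, hji1⟩)).2
      have hle : (colset A i).orderEmbOfFin h1 ⟨j - 1, hj1i⟩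
          ≤ (colset A (i + 1)).orderEmbOfFin h2 ⟨j + 1 - 1, hji1⟩ := by
        apply le_of_cnt_ge h1
        omega
      rw [Fin.le_def] at hle
      omega


lemma asmTriangle_apply' (A : Matrix (Fin n) (Fin n) ℤ) {i j : ℕ}
    (h : (colset A i).card = i) (hj : 1 ≤ j) (hji : j ≤ i) (hin : i ≤ n)
    (k : Fin i) (hk : (k : ℕ) = j - 1) :
    asmTriangle A i j = ((colset A i).orderEmbOfFin h k : ℕ) + 1 := by
  rw [asmTriangle_apply A h hj hji hin]
  have : (⟨j - 1, by omega⟩ : Fin i) = k := Fin.ext hk.symm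
  rw [this]

lemma ps_indicator (hA : IsASM A) {i : ℕ} (hin : i ≤ n) (c : Fin n) :
    ps A i c = if c ∈ colset A i then 1 else 0 := by
  rcases ps_mem hA hin c with h | h
  · rw [h, if_neg]; rw [mem_colset, h]; omega
  · rw [h, if_pos]; rw [mem_colset]; exact h

lemma colset_eq_of_triangle_eq {B : Matrix (Fin n) (Fin n) ℤ} (hA : IsASM A) (hB : IsASM B)
    (heq : asmTriangle A = asmTriangle B) {i : ℕ} (hin : i ≤ n) :
    colset A i = colset B i := by
  have hA' := card_colset hA hin
  have hB' := card_colset hB hin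
  have hfun : ⇑((colset A i).orderEmbOfFin hA') = ⇑((colset B i).orderEmbOfFin hB') := by
    funext k
    have hk1 : 1 ≤ (k : ℕ) + 1 := by omega
    have hk2 : (k : ℕ) + 1 ≤ i := by omega
    have h := congrFun (congrFun heq i) ((k : ℕ) + 1)
    rw [asmTriangle_apply' A hA' hk1 hk2 hin k (by omega),
        asmTriangle_apply' B hB' hk1 hk2 hin k (by omega)] at h
    exact Fin.ext (by omega)
  have hst : (colset A i : Set (Fin n)) = (colset B i : Set (Fin n)) := by
    rw [← Finset.range_orderEmbOfFin _ hA', ← Finset.range_orderEmbOfFin _ hB', hfun]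
  exact Finset.coe_inj.mp hst

lemma inj_aux {B : Matrix (Fin n) (Fin n) ℤ} (hA : IsASM A) (hB : IsASM B)
    (heq : asmTriangle A = asmTriangle B) : A = B := by
  funext r c
  have h1 := colset_eq_of_triangle_eq hA hB heq (i := (r : ℕ)) (by omega)
  have h2 := colset_eq_of_triangle_eq hA hB heq (i := (r : ℕ) + 1) r.isLt
  have pA : ps A ((r : ℕ) + 1) c = ps A (r : ℕ) c + A r c := by
    have := ps_succ A r.isLt c
    rwa [Fin.eta] at this
  have pB : ps B ((r : ℕ) + 1) c = ps B (r : ℕ) c + B r c := by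
    have := ps_succ B r.isLt c
    rwa [Fin.eta] at this
  have iA1 := ps_indicator hA (i := (r : ℕ)) (by omega) c
  have iA2 := ps_indicator hA (i := (r : ℕ) + 1) r.isLt c
  have iB1 := ps_indicator hB (i := (r : ℕ)) (by omega) c
  have iB2 := ps_indicator hB (i := (r : ℕ) + 1) r.isLt c
  rw [iA1, iA2] at pA
  rw [iB1, iB2, ← h1, ← h2] at pB
  by_cases m1 : c ∈ colset A (r : ℕ) <;> by_cases m2 : c ∈ colset A ((r : ℕ) + 1) <;>
    simp only [m1, m2, if_pos, if_neg, if_true, if_false] at pA pB <;> omega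


section surj

variable {t : ℕ → ℕ → ℕ}

lemma t_lt (ht : IsMonotoneTriangle n t) {i a : ℕ} (ha : 1 ≤ a) (hin : i ≤ n) :
    ∀ d, a + d + 1 ≤ i → t i a < t i (a + d + 1) := by
  intro d
  induction d with
  | zero => intro h; exact ht.2.2.1 i a ha h hin
  | succ d ih =>
    intro h
    have h1 : t i (a + d + 1) < t i (a + d + 1 + 1) :=
      ht.2.2.1 i (a + d + 1) (by omega) (by omega) hin
    have h2 := ih (by omega)
    have : a + (d + 1) + 1 = a + d + 1 + 1 := by omega
    rw [this]
    omega

lemma t_strictMono (ht : IsMonotoneTriangle n t) {i a b : ℕ} (ha : 1 ≤ a) (hab : a < b)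
    (hbi : b ≤ i) (hin : i ≤ n) : t i a < t i b := by
  have hb : b = a + (b - a - 1) + 1 := by omega
  rw [hb]
  exact t_lt ht ha hin (b - a - 1) (by omega)

lemma t_ub (ht : IsMonotoneTriangle n t) :
    ∀ d {i j}, 1 ≤ j → j ≤ i → i + d = n → t i j ≤ j + d := by
  intro d
  induction d with
  | zero =>
    intro i j hj hji hd
    have : i = n := by omega
    subst this
    rw [ht.2.1 j hj (by omega)]
    omega
  | succ d ih =>
    intro i j hj hji hd
    have h1 := (ht.2.2.2.1 i j hj hji (by omega)).2
    have h2 := ih (i := i + 1) (j := j + 1) (by omega) (by omega) (by omega)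
    omega

lemma t_le_n (ht : IsMonotoneTriangle n t) {i j : ℕ} (hj : 1 ≤ j) (hji : j ≤ i)
    (hin : i ≤ n) : t i j ≤ n := by
  have := t_ub ht (n - i) hj hji (by omega)
  omega

lemma filter_le_fin (j : Fin n) : Finset.univ.filter (fun r : Fin n => r ≤ j)
    = Finset.univ.filter (fun r : Fin n => (r : ℕ) < (j : ℕ) + 1) := by
  apply Finset.filter_congr; intro r _; rw [Fin.le_def]; omega

def chi (t : ℕ → ℕ → ℕ) (i : ℕ) (c : Fin n) : ℤ :=
  if ((Finset.Icc 1 i).filter (fun j => t i j = (c : ℕ) + 1)).Nonempty then 1 else 0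

lemma chi_zero (c : Fin n) : chi t 0 c = 0 := by
  rw [chi, if_neg]
  rintro ⟨j, hj⟩
  rw [Finset.mem_filter, Finset.mem_Icc] at hj
  omega

lemma chi_n (ht : IsMonotoneTriangle n t) (c : Fin n) : chi t n c = 1 := by
  rw [chi, if_pos]
  exact ⟨(c : ℕ) + 1, Finset.mem_filter.mpr ⟨Finset.mem_Icc.mpr ⟨by omega, by omega⟩,
    by rw [ht.2.1 ((c : ℕ) + 1) (by omega) (by omega)]⟩⟩

def matOf (t : ℕ → ℕ → ℕ) : Matrix (Fin n) (Fin n) ℤ :=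
  fun r c => chi t ((r : ℕ) + 1) c - chi t (r : ℕ) c

lemma ps_matOf {i : ℕ} (hin : i ≤ n) (c : Fin n) : ps (matOf t) i c = chi t i c := by
  induction i with
  | zero => rw [ps_zero, chi_zero]
  | succ i ih =>
    rw [ps_succ _ (by omega : i < n), ih (by omega)]
    show chi t i c + (chi t (i + 1) c - chi t i c) = _
    ring

lemma card_chi_eq (ht : IsMonotoneTriangle n t) {i y : ℕ} (hin : i ≤ n) :
    ((Finset.univ.filter (fun c : Fin n => (c : ℕ) < y)).filter
        (fun c : Fin n =>
          ((Finset.Icc 1 i).filter (fun j => t i j = (c : ℕ) + 1)).Nonempty)).card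
      = ((Finset.Icc 1 i).filter (fun j => t i j ≤ y)).card := by
  symm
  apply Finset.card_bij (fun j hj =>
    (⟨t i j - 1, by
      have hj' := Finset.mem_filter.mp hj
      have hj'' := Finset.mem_Icc.mp hj'.1
      have h1 := ht.1 i j hj''.1 hj''.2 hin
      have h2 := t_le_n ht hj''.1 hj''.2 hin
      omega⟩ : Fin n))
  · intro j hj
    have hj' := Finset.mem_filter.mp hj
    have hj'' := Finset.mem_Icc.mp hj'.1
    have h1 := ht.1 i j hj''.1 hj''.2 hin
    refine Finset.mem_filter.mpr ⟨Finset.mem_filter.mpr ⟨Finset.mem_univ _, ?_⟩, ?_⟩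
    · show t i j - 1 < y
      have := hj'.2
      omega
    · exact ⟨j, Finset.mem_filter.mpr ⟨hj'.1, by show t i j = t i j - 1 + 1; omega⟩⟩
  · intro a ha b hb hab
    have ha' := Finset.mem_Icc.mp (Finset.mem_filter.mp ha).1
    have hb' := Finset.mem_Icc.mp (Finset.mem_filter.mp hb).1
    have ha1 := ht.1 i a ha'.1 ha'.2 hin
    have hb1 := ht.1 i b hb'.1 hb'.2 hin
    have hv : t i a - 1 = t i b - 1 := congrArg Fin.val hab
    by_contra hne
    rcases Nat.lt_or_ge a b with h | h
    · have := t_strictMono ht ha'.1 h hb'.2 hin; omega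
    · have hlt : b < a := by omega
      have := t_strictMono ht hb'.1 hlt ha'.2 hin; omega
  · intro c hc
    have hc' := Finset.mem_filter.mp hc
    obtain ⟨j, hjmem⟩ := hc'.2
    have hj := (Finset.mem_filter.mp hjmem).1
    have hjt := (Finset.mem_filter.mp hjmem).2
    have hj' := Finset.mem_Icc.mp hj
    have hcy : (c : ℕ) < y := (Finset.mem_filter.mp hc'.1).2
    refine ⟨j, Finset.mem_filter.mpr ⟨hj, by omega⟩, ?_⟩
    exact Fin.ext (by show t i j - 1 = (c : ℕ); omega)

lemma sum_chi (ht : IsMonotoneTriangle n t) {i y : ℕ} (hin : i ≤ n) :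
    ∑ c ∈ Finset.univ.filter (fun c : Fin n => (c : ℕ) < y), chi t i c
      = (((Finset.Icc 1 i).filter (fun j => t i j ≤ y)).card : ℤ) := by
  unfold chi
  rw [Finset.sum_boole]
  rw [card_chi_eq ht hin]

lemma cntT_n (ht : IsMonotoneTriangle n t) {i : ℕ} (hin : i ≤ n) :
    ((Finset.Icc 1 i).filter (fun j => t i j ≤ n)).card = i := by
  rw [Finset.filter_true_of_mem, Nat.card_Icc]
  · omega
  · intro j hj
    have hj' := Finset.mem_Icc.mp hj
    exact t_le_n ht hj'.1 hj'.2 hin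

lemma cntT_interlace (ht : IsMonotoneTriangle n t) {i y : ℕ} (hi : i + 1 ≤ n) :
    ((Finset.Icc 1 i).filter (fun j => t i j ≤ y)).card
        ≤ ((Finset.Icc 1 (i + 1)).filter (fun j => t (i + 1) j ≤ y)).card
    ∧ ((Finset.Icc 1 (i + 1)).filter (fun j => t (i + 1) j ≤ y)).card
        ≤ ((Finset.Icc 1 i).filter (fun j => t i j ≤ y)).card + 1 := by
  constructor
  · apply Finset.card_le_card_of_injOn (fun j => j)
    · intro j hj
      beta_reduce
      have hj' := Finset.mem_filter.mp hj
      have hj'' := Finset.mem_Icc.mp hj'.1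
      have := (ht.2.2.2.1 i j hj''.1 hj''.2 hi).1
      refine Finset.mem_filter.mpr ⟨Finset.mem_Icc.mpr ⟨hj''.1, by omega⟩, by omega⟩
    · intro a _ b _ h; exact h
  · have hcard : ((Finset.Icc 1 (i + 1)).filter (fun j => t (i + 1) j ≤ y)).card
        ≤ (insert 0 ((Finset.Icc 1 i).filter (fun j => t i j ≤ y))).card := by
      apply Finset.card_le_card_of_injOn (fun j => j - 1)
      · intro j hj
        beta_reduce
        have hj' := Finset.mem_filter.mp hj
        have hj'' := Finset.mem_Icc.mp hj'.1
        rcases Nat.eq_or_lt_of_le hj''.1 with h1 | h1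
        · rw [← h1]; exact Finset.mem_insert_self 0 _
        · apply Finset.mem_insert_of_mem
          refine Finset.mem_filter.mpr ⟨Finset.mem_Icc.mpr ⟨by omega, by omega⟩, ?_⟩
          have := (ht.2.2.2.1 i (j - 1) (by omega) (by omega) hi).2
          have hj1 : j - 1 + 1 = j := by omega
          rw [hj1] at this
          have := hj'.2
          omega
      · intro a ha b hb h
        have ha' := Finset.mem_Icc.mp (Finset.mem_filter.mp ha).1
        have hb' := Finset.mem_Icc.mp (Finset.mem_filter.mp hb).1
        have h' : a - 1 = b - 1 := h
        omega
    have := Finset.card_insert_le 0 ((Finset.Icc 1 i).filter (fun j => t i j ≤ y))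
    omega

lemma isASM_matOf (ht : IsMonotoneTriangle n t) : IsASM (matOf (n := n) t) := by
  refine ⟨?_, ?_, ?_, ?_, ?_⟩
  · intro r c
    unfold matOf chi
    split_ifs <;> norm_num
  · intro r x
    have hflt := filter_le_fin x
    have hsplit : ∑ c ∈ Finset.univ.filter (fun c : Fin n => c ≤ x), matOf t r c
        = ∑ c ∈ Finset.univ.filter (fun c : Fin n => (c : ℕ) < (x : ℕ) + 1), chi t ((r : ℕ) + 1) c
          - ∑ c ∈ Finset.univ.filter (fun c : Fin n => (c : ℕ) < (x : ℕ) + 1), chi t (r : ℕ) c := by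
      rw [← Finset.sum_sub_distrib, hflt]
      rfl
    rw [hsplit, sum_chi ht r.isLt, sum_chi ht (by omega : (r : ℕ) ≤ n)]
    have := cntT_interlace ht (i := (r : ℕ)) (y := (x : ℕ) + 1) r.isLt
    rcases Nat.eq_or_lt_of_le this.1 with h | h
    · left; rw [← h]; ring
    · right
      have h2 := this.2
      have : ((Finset.Icc 1 ((r : ℕ) + 1)).filter (fun j => t ((r : ℕ) + 1) j ≤ (x : ℕ) + 1)).card
          = ((Finset.Icc 1 (r : ℕ)).filter (fun j => t (r : ℕ) j ≤ (x : ℕ) + 1)).card + 1 := by omega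
      rw [this]
      push_cast
      ring
  · intro x c
    rw [filter_le_fin x]
    have hps : ps (matOf t) ((x : ℕ) + 1) c = chi t ((x : ℕ) + 1) c := ps_matOf x.isLt c
    rw [ps] at hps
    rw [hps]
    unfold chi
    split_ifs
    · right; rfl
    · left; rfl
  · intro r
    have huniv : (Finset.univ : Finset (Fin n))
        = Finset.univ.filter (fun c : Fin n => (c : ℕ) < n) := filter_lt_n.symm
    have hsplit : ∑ c, matOf t r c
        = ∑ c ∈ Finset.univ.filter (fun c : Fin n => (c : ℕ) < n), chi t ((r : ℕ) + 1) c
          - ∑ c ∈ Finset.univ.filter (fun c : Fin n => (c : ℕ) < n), chi t (r : ℕ) c := by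
      rw [← Finset.sum_sub_distrib, ← huniv]
      rfl
    rw [hsplit, sum_chi ht r.isLt, sum_chi ht (by omega : (r : ℕ) ≤ n),
      cntT_n ht r.isLt, cntT_n ht (by omega : (r : ℕ) ≤ n)]
    push_cast
    ring
  · intro c
    have huniv : (Finset.univ : Finset (Fin n))
        = Finset.univ.filter (fun r : Fin n => (r : ℕ) < n) := filter_lt_n.symm
    have : ∑ r, matOf t r c = ps (matOf t) n c := by rw [ps, ← huniv]
    rw [this, ps_matOf le_rfl c, chi_n ht c]

lemma triangle_matOf (ht : IsMonotoneTriangle n t) : asmTriangle (matOf (n := n) t) = t := by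
  funext i j
  by_cases hio : 1 ≤ j ∧ j ≤ i ∧ i ≤ n
  · obtain ⟨hj, hji, hin⟩ := hio
    have hbound : ∀ k : Fin i, t i ((k : ℕ) + 1) - 1 < n := by
      intro k
      have h1 := ht.1 i ((k : ℕ) + 1) (by omega) (by omega) hin
      have h2 := t_le_n ht (j := (k : ℕ) + 1) (by omega) (by omega) hin
      omega
    have hmem : ∀ k : Fin i, (⟨t i ((k : ℕ) + 1) - 1, hbound k⟩ : Fin n) ∈ colset (matOf t) i := by
      intro k
      rw [mem_colset, ps_matOf hin, chi, if_pos]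
      refine ⟨(k : ℕ) + 1, Finset.mem_filter.mpr ⟨Finset.mem_Icc.mpr ⟨by omega, by omega⟩, ?_⟩⟩
      show t i ((k : ℕ) + 1) = t i ((k : ℕ) + 1) - 1 + 1
      have := ht.1 i ((k : ℕ) + 1) (by omega) (by omega) hin
      omega
    have hg : StrictMono (fun k : Fin i => (⟨t i ((k : ℕ) + 1) - 1, hbound k⟩ : Fin n)) := by
      intro a b hab
      rw [Fin.lt_def]
      show t i ((a : ℕ) + 1) - 1 < t i ((b : ℕ) + 1) - 1
      have h1 := ht.1 i ((a : ℕ) + 1) (by omega) (by omega) hin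
      have h2 := t_strictMono ht (a := (a : ℕ) + 1) (b := (b : ℕ) + 1) (by omega)
        (by rw [Fin.lt_def] at hab; omega) (by omega) hin
      omega
    have himg : colset (matOf t) i
        = Finset.image (fun k : Fin i => (⟨t i ((k : ℕ) + 1) - 1, hbound k⟩ : Fin n))
            Finset.univ := by
      apply Finset.Subset.antisymm
      · intro c hc
        rw [mem_colset, ps_matOf hin, chi] at hc
        by_cases hex : ((Finset.Icc 1 i).filter (fun j' => t i j' = (c : ℕ) + 1)).Nonempty
        · obtain ⟨j', hj'mem⟩ := hex
          have hj' := (Finset.mem_filter.mp hj'mem).1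
          have hjt := (Finset.mem_filter.mp hj'mem).2
          have hj'' := Finset.mem_Icc.mp hj'
          refine Finset.mem_image.mpr ⟨⟨j' - 1, by omega⟩, Finset.mem_univ _, ?_⟩
          apply Fin.ext
          show t i (j' - 1 + 1) - 1 = (c : ℕ)
          have : j' - 1 + 1 = j' := by omega
          rw [this]
          omega
        · rw [if_neg hex] at hc
          exact absurd hc (by norm_num)
      · intro c hc
        obtain ⟨k, -, rfl⟩ := Finset.mem_image.mp hc
        exact hmem k
    have hcard : (colset (matOf (n := n) t) i).card = i := by
      rw [himg, Finset.card_image_of_injective _ hg.injective, Finset.card_univ,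
        Fintype.card_fin]
    have huniq : (fun k : Fin i => (⟨t i ((k : ℕ) + 1) - 1, hbound k⟩ : Fin n))
        = ⇑((colset (matOf t) i).orderEmbOfFin hcard) :=
      Finset.orderEmbOfFin_unique hcard (fun k => hmem k) hg
    rw [asmTriangle_apply' (matOf t) hcard hj hji hin ⟨j - 1, by omega⟩ rfl, ← huniq]
    show t i (j - 1 + 1) - 1 + 1 = t i j
    have hjj : j - 1 + 1 = j := by omega
    rw [hjj]
    have := ht.1 i j hj hji hin
    omega
  · rw [asmTriangle_outside _ hio, ht.2.2.2.2 i j hio]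

end surj


end ASMBij


/-- The map `A ↦ asmTriangle A` is a bijection from ASMs of order `n` onto monotone
triangles of order `n`. -/
theorem asmTriangle_bijOn (n : ℕ) :
    Set.BijOn (asmTriangle (n := n)) {A | IsASM A} {t | IsMonotoneTriangle n t} := by
  refine ⟨fun A hA => ASMBij.forward hA, fun A hA B hB heq => ASMBij.inj_aux hA hB heq, ?_⟩
  intro t ht
  exact ⟨ASMBij.matOf t, ASMBij.isASM_matOf ht, ASMBij.triangle_matOf ht⟩
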